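/- In the dual $\mathcal J_p^*$ of the James space, let $(e_n^*)$ be the coordinate functionals. Then for all $k$ and all $n_1 < \cdots < n_{2k}$, $\|\sum_{j=1}^{2k} (-1)^j e_{n_j}^*\|_{\mathcal J_p^*} \le k^{1/p'}$, where $p'$ is the conjugate exponent of $p$. -/

import Mathlib

open Filter

lemma sum_range_two_mul_aux (k : ℕ) (f : ℕ → ℝ) :
    ∑ j ∈ Finset.range (2 * k), f j = ∑ i ∈ Finset.range k, (f (2 * i) + f (2 * i + 1)) := by
  induction k with
  | zero => simp
  | succ k ih =>
      rw [Nat.mul_succ, Finset.sum_range_succ, Finset.sum_range_succ, Finset.sum_range_succ, ih]; ring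

/-- In `𝒥_p^*`, `‖∑_{j=1}^{2k} (-1)^j e*_{n_j}‖ ≤ k^{1/p'}` where `1/p + 1/p' = 1`:
equivalently, for every `x` in the unit ball of the James space `𝒥_p` (i.e. `x(n) → 0`
and every `p`-variation sum of `x` is at most `1`), one has
`|∑_{j=1}^{2k} (-1)^j x(n_j)| ≤ k^{1/p'}`. -/
theorem james_dual_alternating_bound (p p' : ℝ) (hp : 1 < p) (hpp' : 1 / p + 1 / p' = 1)
    (k : ℕ) (n : Fin (2 * k) → ℕ) (hn : StrictMono n)
    (x : ℕ → ℝ) (hx0 : Tendsto x atTop (nhds 0))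
    (hxball : ∀ (r : ℕ) (P : Fin (r + 1) → ℕ), StrictMono P →
      (∑ i : Fin r, |x (P i.succ) - x (P i.castSucc)| ^ p) ≤ 1) :
    |∑ j : Fin (2 * k), (-1 : ℝ) ^ (j : ℕ) * x (n j)| ≤ (k : ℝ) ^ (1 / p') := by
  have hpq : Real.HolderConjugate p p' := Real.holderConjugate_iff.mpr ⟨hp, by rw [one_div, one_div] at hpp'; exact hpp'⟩
  rcases Nat.eq_zero_or_pos k with hk | hk
  · subst hk
    simp only [Nat.mul_zero]
    simp only [Finset.univ_eq_empty, Finset.sum_empty, abs_zero]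
    exact Real.rpow_nonneg (by norm_num) _
  -- extend x ∘ n to all of ℕ
  set y : ℕ → ℝ := fun j => if h : j < 2 * k then x (n ⟨j, h⟩) else 0 with hy
  have hyval : ∀ (j : ℕ) (h : j < 2 * k), y j = x (n ⟨j, h⟩) := fun j h => dif_pos h
  -- rewrite the alternating sum as a sum of differences
  have h1 : ∑ j : Fin (2 * k), (-1 : ℝ) ^ (j : ℕ) * x (n j)
      = ∑ i ∈ Finset.range k, (y (2 * i) - y (2 * i + 1)) := by
    have : ∑ j : Fin (2 * k), (-1 : ℝ) ^ (j : ℕ) * x (n j)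
        = ∑ j ∈ Finset.range (2 * k), (-1 : ℝ) ^ j * y j := by
      rw [← Fin.sum_univ_eq_sum_range]
      refine Finset.sum_congr rfl fun j _ => ?_
      rw [hyval j j.isLt]
    rw [this, sum_range_two_mul_aux]
    refine Finset.sum_congr rfl fun i _ => ?_
    have he : (-1 : ℝ) ^ (2 * i) = 1 := Even.neg_one_pow ⟨i, two_mul i⟩
    rw [pow_succ, he]
    ring
  -- bound by the sum of absolute differences
  have h2 : |∑ j : Fin (2 * k), (-1 : ℝ) ^ (j : ℕ) * x (n j)|
      ≤ ∑ i ∈ Finset.range k, |y (2 * i + 1) - y (2 * i)| := by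
    rw [h1]
    refine (Finset.abs_sum_le_sum_abs _ _).trans_eq ?_
    exact Finset.sum_congr rfl fun i _ => abs_sub_comm _ _
  -- the p-variation bound for the pairs
  have h3 : ∑ i ∈ Finset.range k, |y (2 * i + 1) - y (2 * i)| ^ p ≤ 1 := by
    have hcast : 2 * k - 1 + 1 = 2 * k := by omega
    set P : Fin (2 * k - 1 + 1) → ℕ := fun i => n (Fin.cast hcast i) with hP
    have hPmono : StrictMono P := by
      intro a b hab
      exact hn (by rw [Fin.lt_def] at hab ⊢; exact hab)
    have hball := hxball (2 * k - 1) P hPmono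
    have hconv : ∑ i : Fin (2 * k - 1), |x (P i.succ) - x (P i.castSucc)| ^ p
        = ∑ i ∈ Finset.range (2 * k - 1), |y (i + 1) - y i| ^ p := by
      rw [← Fin.sum_univ_eq_sum_range]
      refine Finset.sum_congr rfl fun i _ => ?_
      have hi1 : (i : ℕ) + 1 < 2 * k := by omega
      have hi0 : (i : ℕ) < 2 * k := by omega
      rw [hyval _ hi1, hyval _ hi0]
      congr 2
    rw [hconv] at hball
    refine le_trans ?_ hball
    have himg : Finset.image (fun j => 2 * j) (Finset.range k) ⊆ Finset.range (2 * k - 1) := by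
      intro i hi
      simp only [Finset.mem_image, Finset.mem_range] at hi ⊢
      obtain ⟨j, hj, rfl⟩ := hi
      omega
    calc ∑ i ∈ Finset.range k, |y (2 * i + 1) - y (2 * i)| ^ p
        = ∑ i ∈ Finset.image (fun j => 2 * j) (Finset.range k), |y (i + 1) - y i| ^ p := by
          rw [Finset.sum_image (by intro a _ b _ h; simp only at h; omega)]
      _ ≤ ∑ i ∈ Finset.range (2 * k - 1), |y (i + 1) - y i| ^ p := by
          refine Finset.sum_le_sum_of_subset_of_nonneg himg fun i _ _ => ?_
          positivity
  -- Hölder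
  have h4 := Real.inner_le_Lp_mul_Lq_of_nonneg (Finset.range k)
    (f := fun i => |y (2 * i + 1) - y (2 * i)|) (g := fun _ => 1) hpq
    (fun i _ => abs_nonneg _) (fun i _ => zero_le_one)
  simp only [mul_one, Real.one_rpow, Finset.sum_const, Finset.card_range, nsmul_eq_mul] at h4
  refine h2.trans (h4.trans ?_)
  have hA : (∑ i ∈ Finset.range k, |y (2 * i + 1) - y (2 * i)| ^ p) ^ (1 / p) ≤ 1 := by
    refine Real.rpow_le_one (Finset.sum_nonneg fun i _ => by positivity) h3 (by positivity)
  calc (∑ i ∈ Finset.range k, |y (2 * i + 1) - y (2 * i)| ^ p) ^ (1 / p) * (k : ℝ) ^ (1 / p')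
      ≤ 1 * (k : ℝ) ^ (1 / p') := by
        refine mul_le_mul_of_nonneg_right hA (Real.rpow_nonneg (by positivity) _)
    _ = (k : ℝ) ^ (1 / p') := one_mul _
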